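/- The function W : GL⁺(3) → ℝ defined by W(F) = exp((1/12)·Σ_{1≤i<j≤3} (log μᵢ(F) − log μⱼ(F))²), where μ₁(F), μ₂(F), μ₃(F) are the eigenvalues of FᵀF, is not rank-one convex on SL(3): there exist a real 3×3 matrix F with det F = 1 and vectors ξ, η ∈ ℝ³ with ⟨F⁻¹ξ, η⟩ = 0 (so that det(F + t·ξ⊗η) = 1 for all t ∈ ℝ) such that the map t ↦ W(F + t·ξ⊗η) is not convex on ℝ. -/

import Mathlib

open Matrix Real

/-- `FᵀF` is Hermitian (symmetric) for a real matrix `F`. -/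
theorem transpose_mul_self_isHermitian {n : ℕ} (F : Matrix (Fin n) (Fin n) ℝ) :
    (Fᵀ * F).IsHermitian := by
  simpa using Matrix.isHermitian_conjTranspose_mul_self F

/-- The eigenvalues of `FᵀF`. -/
noncomputable def muEig {n : ℕ} (F : Matrix (Fin n) (Fin n) ℝ) : Fin n → ℝ :=
  (transpose_mul_self_isHermitian F).eigenvalues

/-- The three-dimensional isochoric exponentiated Hencky energy (with `k = 1`),
`W(F) = exp((1/12)·Σ_{i<j}(log μᵢ − log μⱼ)²)`,
where `μ₁, μ₂, μ₃` are the eigenvalues of `FᵀF`. -/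
noncomputable def WisoEH3 (F : Matrix (Fin 3) (Fin 3) ℝ) : ℝ :=
  Real.exp ((1 : ℝ) / 12 *
    ((Real.log (muEig F 0) - Real.log (muEig F 1)) ^ 2
      + (Real.log (muEig F 1) - Real.log (muEig F 2)) ^ 2
      + (Real.log (muEig F 0) - Real.log (muEig F 2)) ^ 2))

/-! ### Auxiliary material for the counterexample -/

section Aux

/-- For a Hermitian real `3×3` matrix, `det (x•1 - C)` is the product of `x - μᵢ`. -/
private theorem det_smul_one_sub_eq_prod (C : Matrix (Fin 3) (Fin 3) ℝ) (hC : C.IsHermitian)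
    (x : ℝ) :
    (x • (1 : Matrix (Fin 3) (Fin 3) ℝ) - C).det = ∏ i, (x - hC.eigenvalues i) := by
  set U := (hC.eigenvectorUnitary : Matrix (Fin 3) (Fin 3) ℝ) with hUdef
  have hU : U * star U = 1 := Matrix.mem_unitaryGroup_iff.mp hC.eigenvectorUnitary.2
  have h1 : U * (x • (1 : Matrix (Fin 3) (Fin 3) ℝ)) * star U = x • 1 := by
    rw [Matrix.mul_smul, Matrix.smul_mul, Matrix.mul_one, hU]
  have h2 : U * diagonal (RCLike.ofReal ∘ hC.eigenvalues) * star U = C := hC.spectral_theorem.symm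
  have h3 : x • (1 : Matrix (Fin 3) (Fin 3) ℝ) - C
      = U * (x • (1 : Matrix (Fin 3) (Fin 3) ℝ) - diagonal (RCLike.ofReal ∘ hC.eigenvalues))
        * star U := by
    rw [Matrix.mul_sub, Matrix.sub_mul, h1, h2]
  rw [h3, Matrix.det_mul, Matrix.det_mul, mul_right_comm, ← Matrix.det_mul, hU,
    Matrix.det_one, one_mul]
  have hg : (RCLike.ofReal ∘ hC.eigenvalues : Fin 3 → ℝ) = hC.eigenvalues := by
    rw [RCLike.ofReal_real_eq_id]; rfl
  rw [hg]
  have hx1 : x • (1 : Matrix (Fin 3) (Fin 3) ℝ) = diagonal (fun _ => x) := by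
    ext i j
    by_cases h : i = j <;> simp [Matrix.one_apply, Matrix.diagonal_apply, h]
  rw [hx1, Matrix.diagonal_sub, Matrix.det_diagonal]

/-- Numeric bound: `log 1728 ≤ 10 log 2 + 0.5237`. -/
private theorem log_1728_le : Real.log 1728 ≤ 10 * Real.log 2 + 5237/10000 := by
  have h : (1728:ℝ) ≤ Real.exp (10 * Real.log 2 + 5237/10000) := by
    have hs : ∑ i ∈ Finset.range 9, ((5237:ℝ)/10000) ^ i / (Nat.factorial i)
        ≤ Real.exp (5237/10000) := Real.sum_le_exp_of_nonneg (by norm_num) 9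
    have hv : (1728:ℝ)/1024 ≤ ∑ i ∈ Finset.range 9, ((5237:ℝ)/10000) ^ i / (Nat.factorial i) := by
      simp [Finset.sum_range_succ, Nat.factorial]
      norm_num
    have hexp : Real.exp (10 * Real.log 2 + 5237/10000) = 1024 * Real.exp (5237/10000) := by
      rw [Real.exp_add]
      congr 1
      rw [show (10:ℝ) * Real.log 2 = (10:ℕ) * Real.log 2 by norm_num, Real.exp_nat_mul,
        Real.exp_log (by norm_num : (0:ℝ) < 2)]
      norm_num
    rw [hexp]
    nlinarith [Real.exp_pos ((5237:ℝ)/10000)]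
  calc Real.log 1728 ≤ Real.log (Real.exp (10 * Real.log 2 + 5237/10000)) :=
        Real.log_le_log (by norm_num) h
    _ = _ := Real.log_exp _

/-- Numeric bound: `log 47711 ≤ 15 log 2 + 0.3765`. -/
private theorem log_47711_le : Real.log 47711 ≤ 15 * Real.log 2 + 3765/10000 := by
  have h : (47711:ℝ) ≤ Real.exp (15 * Real.log 2 + 3765/10000) := by
    have hs : ∑ i ∈ Finset.range 9, ((3765:ℝ)/10000) ^ i / (Nat.factorial i)
        ≤ Real.exp (3765/10000) := Real.sum_le_exp_of_nonneg (by norm_num) 9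
    have hv : (47711:ℝ)/32768 ≤ ∑ i ∈ Finset.range 9, ((3765:ℝ)/10000) ^ i / (Nat.factorial i) := by
      simp [Finset.sum_range_succ, Nat.factorial]
      norm_num
    have hexp : Real.exp (15 * Real.log 2 + 3765/10000) = 32768 * Real.exp (3765/10000) := by
      rw [Real.exp_add]
      congr 1
      rw [show (15:ℝ) * Real.log 2 = (15:ℕ) * Real.log 2 by norm_num, Real.exp_nat_mul,
        Real.exp_log (by norm_num : (0:ℝ) < 2)]
      norm_num
    rw [hexp]
    nlinarith [Real.exp_pos ((3765:ℝ)/10000)]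
  calc Real.log 47711 ≤ Real.log (Real.exp (15 * Real.log 2 + 3765/10000)) :=
        Real.log_le_log (by norm_num) h
    _ = _ := Real.log_exp _

/-- Any real root of `x³ - τx² + σx - 1` lies in `(1/M, N)` under suitable numeric hypotheses. -/
private theorem root_bounds (τ σ N M μ : ℝ) (h : μ^3 - τ*μ^2 + σ*μ - 1 = 0)
    (hτ0 : 0 < τ) (hσ1 : 1 < σ) (hN : τ + 1 ≤ N) (h1N : 1 ≤ N)
    (hM : σ * (1/M) + (1/M)^3 < 1) :
    1/M < μ ∧ μ < N := by
  have hpos : 0 < μ := by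
    by_contra hc
    push_neg at hc
    nlinarith [mul_nonneg hτ0.le (sq_nonneg μ), mul_nonneg (neg_nonneg.mpr hc) (sq_nonneg μ),
      mul_nonneg (show (0:ℝ) ≤ σ by linarith) (neg_nonneg.mpr hc)]
  constructor
  · by_contra hc
    push_neg at hc
    have h3 : μ^3 ≤ (1/M)^3 := pow_le_pow_left₀ hpos.le hc 3
    nlinarith [mul_nonneg hτ0.le (sq_nonneg μ),
      mul_le_mul_of_nonneg_left hc (by linarith : (0:ℝ) ≤ σ)]
  · by_contra hc
    push_neg at hc
    nlinarith [mul_nonneg (sq_nonneg μ) (show (0:ℝ) ≤ μ - τ - 1 by linarith),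
      mul_nonneg (show (0:ℝ) ≤ μ - 1 by linarith) (show (0:ℝ) ≤ μ + 1 by linarith),
      mul_nonneg (show (0:ℝ) ≤ σ - 1 by linarith) (show (0:ℝ) ≤ μ - 1 by linarith)]

private theorem tri (x z : ℝ) (hx : x ≤ 74552/10000) (hz : -(107738/10000) ≤ z)
    (h1 : 0 ≤ 2*x + z) (h2 : x + 2*z ≤ 0) :
    x^2 + x*z + z^2 ≤ 5481/60 := by
  nlinarith [mul_nonneg (sub_nonneg.2 hx) (sub_nonneg.2 (neg_le_iff_add_nonneg.mp hz)),
    mul_nonneg (sub_nonneg.2 hx) h1,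
    mul_nonneg (sub_nonneg.2 (neg_le_iff_add_nonneg.mp hz)) (neg_nonneg.2 h2),
    mul_nonneg h1 (neg_nonneg.2 h2), sq_nonneg (x + z), sq_nonneg (x - z)]

/-- The key quantitative bound on the Hencky expression from interval bounds on the
logarithms of the eigenvalues. -/
private theorem endpoint_bound (l0 l1 l2 : ℝ) (hsum : l0 + l1 + l2 = 0)
    (hb0 : l0 ≤ 74552/10000) (hb1 : l1 ≤ 74552/10000) (hb2 : l2 ≤ 74552/10000)
    (ha0 : -(107738/10000) ≤ l0) (ha1 : -(107738/10000) ≤ l1) (ha2 : -(107738/10000) ≤ l2) :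
    1/12 * ((l0 - l1)^2 + (l1 - l2)^2 + (l0 - l2)^2) < 98 * Real.log 2 ^ 2 := by
  have hq : ∃ x z : ℝ, x ≤ 74552/10000 ∧ -(107738/10000) ≤ z ∧ 0 ≤ 2*x + z ∧ x + 2*z ≤ 0 ∧
      (l0 - l1)^2 + (l1 - l2)^2 + (l0 - l2)^2 = 6*(x^2 + x*z + z^2) := by
    rcases le_total l0 l1 with h01 | h01 <;> rcases le_total l1 l2 with h12 | h12 <;>
      rcases le_total l0 l2 with h02 | h02
    · exact ⟨l2, l0, hb2, ha0, by linarith, by linarith,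
        by linear_combination (-4*l2+2*l1-4*l0) * hsum⟩
    · exact ⟨l2, l0, hb2, ha0, by linarith, by linarith,
        by linear_combination (-4*l2+2*l1-4*l0) * hsum⟩
    · exact ⟨l1, l0, hb1, ha0, by linarith, by linarith,
        by linear_combination (-4*l1+2*l2-4*l0) * hsum⟩
    · exact ⟨l1, l2, hb1, ha2, by linarith, by linarith,
        by linear_combination (-4*l1+2*l0-4*l2) * hsum⟩
    · exact ⟨l2, l1, hb2, ha1, by linarith, by linarith,
        by linear_combination (-4*l2+2*l0-4*l1) * hsum⟩
    · exact ⟨l0, l1, hb0, ha1, by linarith, by linarith,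
        by linear_combination (-4*l0+2*l2-4*l1) * hsum⟩
    · exact ⟨l0, l2, hb0, ha2, by linarith, by linarith,
        by linear_combination (-4*l0+2*l1-4*l2) * hsum⟩
    · exact ⟨l0, l2, hb0, ha2, by linarith, by linarith,
        by linear_combination (-4*l0+2*l1-4*l2) * hsum⟩
  obtain ⟨x, z, hx, hz, h1, h2, hq⟩ := hq
  have ht := tri x z hx hz h1 h2
  have hL : (0.6931471803:ℝ) < Real.log 2 := Real.log_two_gt_d9
  nlinarith [sq_nonneg (Real.log 2 - 0.6931471803)]

private theorem exists_root_factor {c a0 a1 a2 : ℝ} (h : (c - a0) * (c - a1) * (c - a2) = 0) :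
    a0 = c ∨ a1 = c ∨ a2 = c := by
  rcases mul_eq_zero.mp h with h' | h'
  · rcases mul_eq_zero.mp h' with h'' | h''
    · exact Or.inl (by linarith [sub_eq_zero.mp h''])
    · exact Or.inr (Or.inl (by linarith [sub_eq_zero.mp h'']))
  · exact Or.inr (Or.inr (by linarith [sub_eq_zero.mp h']))

end Aux

noncomputable section CounterexampleData

private def Fm : Matrix (Fin 3) (Fin 3) ℝ :=
  !![(-245775/4352 : ℝ), (-8/17 : ℝ), (-245745/4352 : ℝ);
    (16385/544 : ℝ), (-15/17 : ℝ), (16383/544 : ℝ);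
    (16383/256 : ℝ), (0 : ℝ), (16385/256 : ℝ)]

private def Gm : Matrix (Fin 3) (Fin 3) ℝ :=
  !![(-245775/4352 : ℝ), (16385/544 : ℝ), (-16383/256 : ℝ);
    (-8/17 : ℝ), (-15/17 : ℝ), (0 : ℝ);
    (245745/4352 : ℝ), (-16383/544 : ℝ), (16385/256 : ℝ)]

private def Epm : Matrix (Fin 3) (Fin 3) ℝ :=
  !![(-90111/4352 : ℝ), (584/85 : ℝ), (-434181/21760 : ℝ);
    (3583/1088 : ℝ), (-543/85 : ℝ), (14853/5440 : ℝ);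
    (83931/4352 : ℝ), (-156/17 : ℝ), (79909/4352 : ℝ)]

private def Emm : Matrix (Fin 3) (Fin 3) ℝ :=
  !![(-401439/4352 : ℝ), (-664/85 : ℝ), (-2023269/21760 : ℝ);
    (61957/1088 : ℝ), (393/85 : ℝ), (312807/5440 : ℝ);
    (473091/4352 : ℝ), (156/17 : ℝ), (477181/4352 : ℝ)]

private def C0m : Matrix (Fin 3) (Fin 3) ℝ :=
  !![(268435457/32768 : ℝ), (0 : ℝ), (268435455/32768 : ℝ);
    (0 : ℝ), (1 : ℝ), (0 : ℝ);
    (268435455/32768 : ℝ), (0 : ℝ), (268435457/32768 : ℝ)]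

private def Cpm : Matrix (Fin 3) (Fin 3) ℝ :=
  !![(7684905653/9469952 : ℝ), (-196677/578 : ℝ), (7351018827/9469952 : ℝ);
    (-196677/578 : ℝ), (248861/1445 : ℝ), (-933543/2890 : ℝ);
    (7351018827/9469952 : ℝ), (-933543/2890 : ℝ), (35167913353/47349760 : ℝ)]

private def Cmm : Matrix (Fin 3) (Fin 3) ℝ :=
  !![(223193541293/9469952 : ℝ), (2290509/1156 : ℝ), (225105859923/9469952 : ℝ);
    (2290509/1156 : ℝ), (240749/1445 : ℝ), (11550591/5780 : ℝ);
    (225105859923/9469952 : ℝ), (11550591/5780 : ℝ), (1135173162337/47349760 : ℝ)]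

private def xiv : Fin 3 → ℝ := ![-4, 3, 5]

private def etav : Fin 3 → ℝ := ![-9729/1088, -156/85, -49659/5440]

private theorem FtF_eq : Fmᵀ * Fm = C0m := by
  have ht : Fmᵀ = !![(-245775/4352 : ℝ), (16385/544 : ℝ), (16383/256 : ℝ);
      (-8/17 : ℝ), (-15/17 : ℝ), (0 : ℝ);
      (-245745/4352 : ℝ), (16383/544 : ℝ), (16385/256 : ℝ)] := by
    ext i j
    fin_cases i <;> fin_cases j <;> simp [Fm, Matrix.transpose_apply]
  rw [ht]
  ext i j
  fin_cases i <;> fin_cases j <;>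
    simp [Fm, C0m, Matrix.mul_apply, Fin.sum_univ_three] <;> norm_num

private theorem EptEp_eq : Epmᵀ * Epm = Cpm := by
  have ht : Epmᵀ = !![(-90111/4352 : ℝ), (3583/1088 : ℝ), (83931/4352 : ℝ);
      (584/85 : ℝ), (-543/85 : ℝ), (-156/17 : ℝ);
      (-434181/21760 : ℝ), (14853/5440 : ℝ), (79909/4352 : ℝ)] := by
    ext i j
    fin_cases i <;> fin_cases j <;> simp [Epm, Matrix.transpose_apply]
  rw [ht]
  ext i j
  fin_cases i <;> fin_cases j <;>
    simp [Epm, Cpm, Matrix.mul_apply, Fin.sum_univ_three] <;> norm_num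

private theorem EmtEm_eq : Emmᵀ * Emm = Cmm := by
  have ht : Emmᵀ = !![(-401439/4352 : ℝ), (61957/1088 : ℝ), (473091/4352 : ℝ);
      (-664/85 : ℝ), (393/85 : ℝ), (156/17 : ℝ);
      (-2023269/21760 : ℝ), (312807/5440 : ℝ), (477181/4352 : ℝ)] := by
    ext i j
    fin_cases i <;> fin_cases j <;> simp [Emm, Matrix.transpose_apply]
  rw [ht]
  ext i j
  fin_cases i <;> fin_cases j <;>
    simp [Emm, Cmm, Matrix.mul_apply, Fin.sum_univ_three] <;> norm_num

private theorem det_C0 (x : ℝ) : (x • (1 : Matrix (Fin 3) (Fin 3) ℝ) - C0m).det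
    = (x - 16384) * (x - 1) * (x - 1/16384) := by
  have h : x • (1 : Matrix (Fin 3) (Fin 3) ℝ) - C0m =
      !![x - 268435457/32768, (0 : ℝ), -(268435455/32768 : ℝ);
        (0 : ℝ), x - 1, (0 : ℝ);
        -(268435455/32768 : ℝ), (0 : ℝ), x - 268435457/32768] := by
    ext i j
    fin_cases i <;> fin_cases j <;> simp [C0m, Matrix.one_apply] <;> ring
  rw [h, Matrix.det_fin_three]
  simp
  ring

private theorem det_Cp (x : ℝ) : (x • (1 : Matrix (Fin 3) (Fin 3) ℝ) - Cpm).det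
    = x^3 - (40873559433/23674880)*x^2 + (1129514866017/23674880)*x - 1 := by
  have h : x • (1 : Matrix (Fin 3) (Fin 3) ℝ) - Cpm =
      !![x - 7684905653/9469952, (196677/578 : ℝ), -(7351018827/9469952 : ℝ);
        (196677/578 : ℝ), x - 248861/1445, (933543/2890 : ℝ);
        -(7351018827/9469952 : ℝ), (933543/2890 : ℝ), x - 35167913353/47349760] := by
    ext i j
    fin_cases i <;> fin_cases j <;> simp [Cpm, Matrix.one_apply] <;> ring
  rw [h, Matrix.det_fin_three]
  simp
  ring

private theorem det_Cm (x : ℝ) : (x • (1 : Matrix (Fin 3) (Fin 3) ℝ) - Cmm).det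
    = x^3 - (1129514866017/23674880)*x^2 + (40873559433/23674880)*x - 1 := by
  have h : x • (1 : Matrix (Fin 3) (Fin 3) ℝ) - Cmm =
      !![x - 223193541293/9469952, -(2290509/1156 : ℝ), -(225105859923/9469952 : ℝ);
        -(2290509/1156 : ℝ), x - 240749/1445, -(11550591/5780 : ℝ);
        -(225105859923/9469952 : ℝ), -(11550591/5780 : ℝ), x - 1135173162337/47349760] := by
    ext i j
    fin_cases i <;> fin_cases j <;> simp [Cmm, Matrix.one_apply] <;> ring
  rw [h, Matrix.det_fin_three]
  simp
  ring

/-- Product formula for the eigenvalues of `FᵀF` via the determinant identity. -/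
private theorem key_prod (E C : Matrix (Fin 3) (Fin 3) ℝ) (hEC : Eᵀ * E = C) (x : ℝ) :
    (x - muEig E 0) * (x - muEig E 1) * (x - muEig E 2)
      = (x • (1 : Matrix (Fin 3) (Fin 3) ℝ) - C).det := by
  rw [← hEC, det_smul_one_sub_eq_prod (Eᵀ * E) (transpose_mul_self_isHermitian E) x,
    Fin.prod_univ_three]
  rfl

end CounterexampleData

set_option maxHeartbeats 1600000 in
/-- The isochoric exponentiated Hencky energy `F ↦ e^{‖dev₃ log U‖²}` is not
rank-one convex even on `SL(3)`: there is a rank-one direction preserving the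
determinant along which it fails to be convex. -/
theorem WisoEH3_not_rankOneConvex_SL3 :
    ∃ (F : Matrix (Fin 3) (Fin 3) ℝ) (ξ η : Fin 3 → ℝ),
      F.det = 1 ∧ dotProduct (F⁻¹ *ᵥ ξ) η = 0 ∧
      ¬ ConvexOn ℝ Set.univ (fun t : ℝ => WisoEH3 (F + t • Matrix.vecMulVec ξ η)) := by
  refine ⟨Fm, xiv, etav, ?_, ?_, ?_⟩
  · rw [Matrix.det_fin_three, Fm]
    simp
    norm_num
  · have hFG : Fm * Gm = 1 := by
      ext i j
      fin_cases i <;> fin_cases j <;>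
        simp [Fm, Gm, Matrix.mul_apply, Fin.sum_univ_three, Matrix.one_apply] <;> norm_num
    rw [Matrix.inv_eq_right_inv hFG]
    simp [Gm, xiv, etav, Matrix.mulVec, dotProduct, Fin.sum_univ_three]
    norm_num
  · -- the three points of evaluation
    intro hcv
    set f : ℝ → ℝ := fun t => WisoEH3 (Fm + t • Matrix.vecMulVec xiv etav) with hf
    have harg0 : Fm + (0:ℝ) • Matrix.vecMulVec xiv etav = Fm := by simp
    have harg1 : Fm + (1:ℝ) • Matrix.vecMulVec xiv etav = Epm := by
      ext i j
      fin_cases i <;> fin_cases j <;>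
        simp [Fm, xiv, etav, Epm, Matrix.vecMulVec_apply] <;> norm_num
    have hargm : Fm + (-1:ℝ) • Matrix.vecMulVec xiv etav = Emm := by
      ext i j
      fin_cases i <;> fin_cases j <;>
        simp [Fm, xiv, etav, Emm, Matrix.vecMulVec_apply] <;> norm_num
    -- value at the midpoint
    have hmid : f 0 = Real.exp (98 * Real.log 2 ^ 2) := by
      have key0 : ∀ x : ℝ, (x - muEig Fm 0) * (x - muEig Fm 1) * (x - muEig Fm 2)
          = (x - 16384) * (x - 1) * (x - 1/16384) := by
        intro x
        rw [key_prod Fm C0m FtF_eq x, det_C0]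
      have h16 : muEig Fm 0 = 16384 ∨ muEig Fm 1 = 16384 ∨ muEig Fm 2 = 16384 :=
        exists_root_factor (by rw [key0]; norm_num)
      have h1 : muEig Fm 0 = 1 ∨ muEig Fm 1 = 1 ∨ muEig Fm 2 = 1 :=
        exists_root_factor (by rw [key0]; norm_num)
      have hinv : muEig Fm 0 = 1/16384 ∨ muEig Fm 1 = 1/16384 ∨ muEig Fm 2 = 1/16384 :=
        exists_root_factor (by rw [key0]; norm_num)
      have hlog16 : Real.log 16384 = 14 * Real.log 2 := by
        rw [show (16384:ℝ) = 2^(14:ℕ) by norm_num, Real.log_pow]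
        norm_num
      have hloginv : Real.log (1/16384) = -(14 * Real.log 2) := by
        rw [show (1/16384:ℝ) = ((2:ℝ)^(14:ℕ))⁻¹ by norm_num, Real.log_inv, Real.log_pow]
        norm_num
      have hrw : f 0 = WisoEH3 Fm := by rw [hf]; simp only [harg0]
      rw [hrw]
      unfold WisoEH3
      rcases h16 with hA | hA | hA <;> rcases h1 with hB | hB | hB <;>
        rcases hinv with hC | hC | hC <;>
        first
          | exact absurd (hA.symm.trans hB) (by norm_num)
          | exact absurd (hA.symm.trans hC) (by norm_num)
          | exact absurd (hB.symm.trans hC) (by norm_num)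
          | (simp only [hA, hB, hC, hlog16, hloginv, Real.log_one]; congr 1; ring)
    -- endpoint bound at t = 1
    have hend_p : f 1 < Real.exp (98 * Real.log 2 ^ 2) := by
      have key : ∀ x : ℝ, (x - muEig Epm 0) * (x - muEig Epm 1) * (x - muEig Epm 2)
          = x^3 - (40873559433/23674880)*x^2 + (1129514866017/23674880)*x - 1 := by
        intro x
        rw [key_prod Epm Cpm EptEp_eq x, det_Cp]
      have hroot0 : (muEig Epm 0)^3 - (40873559433/23674880)*(muEig Epm 0)^2
          + (1129514866017/23674880)*(muEig Epm 0) - 1 = 0 := by linear_combination -key (muEig Epm 0)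
      have hroot1 : (muEig Epm 1)^3 - (40873559433/23674880)*(muEig Epm 1)^2
          + (1129514866017/23674880)*(muEig Epm 1) - 1 = 0 := by linear_combination -key (muEig Epm 1)
      have hroot2 : (muEig Epm 2)^3 - (40873559433/23674880)*(muEig Epm 2)^2
          + (1129514866017/23674880)*(muEig Epm 2) - 1 = 0 := by linear_combination -key (muEig Epm 2)
      have hb : ∀ i : Fin 3, 1/47711 < muEig Epm i ∧ muEig Epm i < 1728 := by
        intro i
        fin_cases i <;>
          [exact root_bounds _ _ 1728 47711 _ hroot0 (by norm_num) (by norm_num)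
            (by norm_num) (by norm_num) (by norm_num);
           exact root_bounds _ _ 1728 47711 _ hroot1 (by norm_num) (by norm_num)
            (by norm_num) (by norm_num) (by norm_num);
           exact root_bounds _ _ 1728 47711 _ hroot2 (by norm_num) (by norm_num)
            (by norm_num) (by norm_num) (by norm_num)]
      have hprod : muEig Epm 0 * muEig Epm 1 * muEig Epm 2 = 1 := by
        have h := key 0
        nlinarith [h]
      have hpos : ∀ i : Fin 3, 0 < muEig Epm i := fun i =>
        lt_trans (by norm_num) (hb i).1
      have hlsum : Real.log (muEig Epm 0) + Real.log (muEig Epm 1)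
          + Real.log (muEig Epm 2) = 0 := by
        rw [← Real.log_mul (hpos 0).ne' (hpos 1).ne',
          ← Real.log_mul (mul_pos (hpos 0) (hpos 1)).ne' (hpos 2).ne', hprod, Real.log_one]
      have hub : ∀ i : Fin 3, Real.log (muEig Epm i) ≤ 74552/10000 := by
        intro i
        have h1 : Real.log (muEig Epm i) ≤ Real.log 1728 :=
          Real.log_le_log (hpos i) (hb i).2.le
        have hL : Real.log 2 < 0.6931471808 := Real.log_two_lt_d9
        linarith [log_1728_le]
      have hlb : ∀ i : Fin 3, -(107738/10000) ≤ Real.log (muEig Epm i) := by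
        intro i
        have h1 : Real.log (1/47711) ≤ Real.log (muEig Epm i) :=
          Real.log_le_log (by norm_num) (hb i).1.le
        have h2 : Real.log (1/47711 : ℝ) = -Real.log 47711 := by
          rw [one_div, Real.log_inv]
        have hL : Real.log 2 < 0.6931471808 := Real.log_two_lt_d9
        linarith [log_47711_le]
      have hrw : f 1 = WisoEH3 Epm := by rw [hf]; simp only [harg1]
      rw [hrw]
      unfold WisoEH3
      exact Real.exp_lt_exp.mpr (endpoint_bound _ _ _ hlsum (hub 0) (hub 1) (hub 2)
        (hlb 0) (hlb 1) (hlb 2))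
    -- endpoint bound at t = -1
    have hend_m : f (-1) < Real.exp (98 * Real.log 2 ^ 2) := by
      have key : ∀ x : ℝ, (x - muEig Emm 0) * (x - muEig Emm 1) * (x - muEig Emm 2)
          = x^3 - (1129514866017/23674880)*x^2 + (40873559433/23674880)*x - 1 := by
        intro x
        rw [key_prod Emm Cmm EmtEm_eq x, det_Cm]
      have hroot0 : (muEig Emm 0)^3 - (1129514866017/23674880)*(muEig Emm 0)^2
          + (40873559433/23674880)*(muEig Emm 0) - 1 = 0 := by linear_combination -key (muEig Emm 0)
      have hroot1 : (muEig Emm 1)^3 - (1129514866017/23674880)*(muEig Emm 1)^2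
          + (40873559433/23674880)*(muEig Emm 1) - 1 = 0 := by linear_combination -key (muEig Emm 1)
      have hroot2 : (muEig Emm 2)^3 - (1129514866017/23674880)*(muEig Emm 2)^2
          + (40873559433/23674880)*(muEig Emm 2) - 1 = 0 := by linear_combination -key (muEig Emm 2)
      have hb : ∀ i : Fin 3, 1/1728 < muEig Emm i ∧ muEig Emm i < 47711 := by
        intro i
        fin_cases i <;>
          [exact root_bounds _ _ 47711 1728 _ hroot0 (by norm_num) (by norm_num)
            (by norm_num) (by norm_num) (by norm_num);
           exact root_bounds _ _ 47711 1728 _ hroot1 (by norm_num) (by norm_num)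
            (by norm_num) (by norm_num) (by norm_num);
           exact root_bounds _ _ 47711 1728 _ hroot2 (by norm_num) (by norm_num)
            (by norm_num) (by norm_num) (by norm_num)]
      have hprod : muEig Emm 0 * muEig Emm 1 * muEig Emm 2 = 1 := by
        have h := key 0
        nlinarith [h]
      have hpos : ∀ i : Fin 3, 0 < muEig Emm i := fun i =>
        lt_trans (by norm_num) (hb i).1
      have hlsum : Real.log (muEig Emm 0) + Real.log (muEig Emm 1)
          + Real.log (muEig Emm 2) = 0 := by
        rw [← Real.log_mul (hpos 0).ne' (hpos 1).ne',
          ← Real.log_mul (mul_pos (hpos 0) (hpos 1)).ne' (hpos 2).ne', hprod, Real.log_one]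
      have hub : ∀ i : Fin 3, Real.log (muEig Emm i) ≤ 107738/10000 := by
        intro i
        have h1 : Real.log (muEig Emm i) ≤ Real.log 47711 :=
          Real.log_le_log (hpos i) (hb i).2.le
        have hL : Real.log 2 < 0.6931471808 := Real.log_two_lt_d9
        linarith [log_47711_le]
      have hlb : ∀ i : Fin 3, -(74552/10000) ≤ Real.log (muEig Emm i) := by
        intro i
        have h1 : Real.log (1/1728) ≤ Real.log (muEig Emm i) :=
          Real.log_le_log (by norm_num) (hb i).1.le
        have h2 : Real.log (1/1728 : ℝ) = -Real.log 1728 := by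
          rw [one_div, Real.log_inv]
        have hL : Real.log 2 < 0.6931471808 := Real.log_two_lt_d9
        linarith [log_1728_le]
      have hrw : f (-1) = WisoEH3 Emm := by rw [hf]; simp only [hargm]
      rw [hrw]
      unfold WisoEH3
      refine Real.exp_lt_exp.mpr ?_
      have heq : 1/12 * ((Real.log (muEig Emm 0) - Real.log (muEig Emm 1))^2
          + (Real.log (muEig Emm 1) - Real.log (muEig Emm 2))^2
          + (Real.log (muEig Emm 0) - Real.log (muEig Emm 2))^2)
          = 1/12 * (((-Real.log (muEig Emm 0)) - (-Real.log (muEig Emm 1)))^2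
          + ((-Real.log (muEig Emm 1)) - (-Real.log (muEig Emm 2)))^2
          + ((-Real.log (muEig Emm 0)) - (-Real.log (muEig Emm 2)))^2) := by ring
      rw [heq]
      exact endpoint_bound _ _ _ (by linarith [hlsum]) (by linarith [hlb 0])
        (by linarith [hlb 1]) (by linarith [hlb 2]) (by linarith [hub 0])
        (by linarith [hub 1]) (by linarith [hub 2])
    -- convexity at the three points gives a contradiction
    have hc := hcv.2 (Set.mem_univ (-1:ℝ)) (Set.mem_univ (1:ℝ))
      (by norm_num : (0:ℝ) ≤ 1/2) (by norm_num : (0:ℝ) ≤ 1/2) (by norm_num : (1:ℝ)/2 + 1/2 = 1)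
    have harg : (1/2:ℝ) • (-1:ℝ) + (1/2:ℝ) • (1:ℝ) = 0 := by norm_num
    rw [harg] at hc
    simp only [smul_eq_mul] at hc
    rw [hmid] at hc
    nlinarith [hend_p, hend_m, hc]
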